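/- For every positive integer n, α·n − 0.85 < out(n) < α·n + 0.85, where out(n) is the Tribonacci successor of n. -/

import Mathlib

set_option maxHeartbeats 1000000

/-- The Tribonacci sequence: T(0)=0, T(1)=0, T(2)=1,
    T(n+3) = T(n+2) + T(n+1) + T(n). -/
def trib : ℕ → ℕ
  | 0 => 0
  | 1 => 0
  | 2 => 1
  | n + 3 => trib (n + 2) + trib (n + 1) + trib n

/-- A Tribonacci representation set: a finite set of naturals, all at least 3,
    containing no three consecutive integers. -/
def IsTribRep (S : Finset ℕ) : Prop :=
  (∀ i ∈ S, 3 ≤ i) ∧ ∀ i : ℕ, ¬(i ∈ S ∧ i + 1 ∈ S ∧ i + 2 ∈ S)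


noncomputable def eT (α : ℝ) (n : ℕ) : ℝ := (trib (n+1) : ℝ) - α * trib n

noncomputable def pT (α : ℝ) (n : ℕ) : ℝ :=
  α * (eT α (n+1))^2 + α*(α-1) * eT α (n+1) * eT α n + (eT α n)^2



lemma e_rec (α : ℝ) (n : ℕ) : eT α (n+3) = eT α (n+2) + eT α (n+1) + eT α n := by
  simp only [eT, show n+3+1 = n+3+1 from rfl, trib]
  push_cast [show trib (n+3+1) = trib (n+3) + trib (n+2) + trib (n+1) from rfl,
    show trib (n+3) = trib (n+2) + trib (n+1) + trib n from rfl]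
  ring

lemma quad (α : ℝ) (hα : α ^ 3 = α ^ 2 + α + 1) :
    ∀ n, α * eT α (n+2) = α*(1-α) * eT α (n+1) - eT α n := by
  intro n
  induction n using Nat.strong_induction_on with
  | _ n ih =>
    match n with
    | 0 => simp [eT, trib]
    | 1 =>
      simp only [eT]
      norm_num [show trib 4 = 2 from rfl, show trib 3 = 1 from rfl, show trib 2 = 1 from rfl,
        show trib 1 = 0 from rfl]
      linear_combination -hα
    | 2 =>
      simp only [eT]
      norm_num [show trib 5 = 4 from rfl, show trib 4 = 2 from rfl, show trib 3 = 1 from rfl,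
        show trib 2 = 1 from rfl]
      linear_combination -hα
    | (m+3) =>
      have h0 := ih m (by omega)
      have h1 := ih (m+1) (by omega)
      have h2 := ih (m+2) (by omega)
      have e0 := e_rec α m
      have e1 := e_rec α (m+1)
      have e2 := e_rec α (m+2)
      have e3 : eT α (m+3+2) = eT α (m+3+1) + eT α (m+3) + eT α (m+2) := e_rec α (m+2)
      linear_combination α*e2 + h0 + h1 + h2 - α*(1-α)*e1 + e0

lemma p_rec (α : ℝ) (hα : α ^ 3 = α ^ 2 + α + 1) (n : ℕ) :
    α * pT α (n+1) = pT α n := by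
  have h := quad α hα n
  simp only [pT]
  linear_combination (α * eT α (n+2) - eT α n) * h

lemma p_val (α : ℝ) (hα : α ^ 3 = α ^ 2 + α + 1) : ∀ n, α^n * pT α n = α := by
  intro n
  induction n with
  | zero => simp [pT, eT, trib]
  | succ k ih =>
    have := p_rec α hα k
    calc α^(k+1) * pT α (k+1) = α^k * (α * pT α (k+1)) := by ring
    _ = α^k * pT α k := by rw [this]
    _ = α := ih

lemma trib0 : trib 0 = 0 := by norm_num [trib]
lemma trib1 : trib 1 = 0 := by norm_num [trib]
lemma trib2 : trib 2 = 1 := by norm_num [trib]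
lemma trib3 : trib 3 = 1 := by norm_num [trib]
lemma trib4 : trib 4 = 2 := by norm_num [trib]
lemma trib5 : trib 5 = 4 := by norm_num [trib]
lemma trib6 : trib 6 = 7 := by norm_num [trib]
lemma trib7 : trib 7 = 13 := by norm_num [trib]
lemma trib8 : trib 8 = 24 := by norm_num [trib]
lemma trib9 : trib 9 = 44 := by norm_num [trib]
lemma trib10 : trib 10 = 81 := by norm_num [trib]
lemma trib11 : trib 11 = 149 := by norm_num [trib]
lemma trib12 : trib 12 = 274 := by norm_num [trib]
lemma trib13 : trib 13 = 504 := by norm_num [trib]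
lemma trib14 : trib 14 = 927 := by norm_num [trib]
lemma trib15 : trib 15 = 1705 := by norm_num [trib]
lemma trib16 : trib 16 = 3136 := by norm_num [trib]
lemma trib17 : trib 17 = 5768 := by norm_num [trib]
lemma trib18 : trib 18 = 10609 := by norm_num [trib]
lemma trib19 : trib 19 = 19513 := by norm_num [trib]
lemma trib20 : trib 20 = 35890 := by norm_num [trib]
lemma trib21 : trib 21 = 66012 := by norm_num [trib]
lemma trib22 : trib 22 = 121415 := by norm_num [trib]
lemma trib23 : trib 23 = 223317 := by norm_num [trib]
lemma trib24 : trib 24 = 410744 := by norm_num [trib]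
lemma trib25 : trib 25 = 755476 := by norm_num [trib]
lemma trib26 : trib 26 = 1389537 := by norm_num [trib]
lemma trib27 : trib 27 = 2555757 := by norm_num [trib]
lemma trib28 : trib 28 = 4700770 := by norm_num [trib]
lemma trib29 : trib 29 = 8646064 := by norm_num [trib]
lemma trib30 : trib 30 = 15902591 := by norm_num [trib]
lemma trib31 : trib 31 = 29249425 := by norm_num [trib]

lemma alpha_lo (α : ℝ) (hα : α ^ 3 = α ^ 2 + α + 1) : 1.8392867552141611 < α := by
  by_contra h
  push_neg at h
  nlinarith [mul_nonneg (sub_nonneg.2 h) (sq_nonneg (α + 0.41964337760708055)), sq_nonneg α]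

lemma alpha_hi (α : ℝ) (hα : α ^ 3 = α ^ 2 + α + 1) : α < 1.8392867552141612 := by
  by_contra h
  push_neg at h
  nlinarith [mul_nonneg (sub_nonneg.2 h) (sq_nonneg (α + 0.4196433776070806)), sq_nonneg α]

lemma e_sq_le (α : ℝ) (hα : α ^ 3 = α ^ 2 + α + 1) (k : ℕ) :
    (eT α (k+1))^2 ≤ 2.725 * ((0.7374:ℝ)^(k+1))^2 := by
  have hlo := alpha_lo α hα
  have hhi := alpha_hi α hα
  have hα0 : (0:ℝ) < α := by linarith
  have hD : (0:ℝ) < α - α^2*(α-1)^2/4 := by nlinarith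
  set D : ℝ := α - α^2*(α-1)^2/4 with hDdef
  have hp : α^k * pT α k = α := p_val α hα k
  have hPD : D * (eT α (k+1))^2 ≤ pT α k := by
    simp only [pT, hDdef]
    nlinarith [sq_nonneg (α*(α-1)*eT α (k+1)/2 + eT α k)]
  have hpk : (0:ℝ) < α^k := pow_pos hα0 k
  have h1 : α^k * (D * (eT α (k+1))^2) ≤ α := by
    calc α^k * (D * (eT α (k+1))^2) ≤ α^k * pT α k :=
          mul_le_mul_of_nonneg_left hPD hpk.le
    _ = α := hp
  have hq1 : (1:ℝ) ≤ (0.7374^2*α) := by nlinarith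
  have h2 : (1:ℝ) ≤ ((0.7374:ℝ)^2*α)^k := one_le_pow₀ hq1
  have hmul : ((0.7374:ℝ)^2*α)^k = ((0.7374:ℝ)^2)^k * α^k := mul_pow _ _ _
  have h2' : (1:ℝ) ≤ ((0.7374:ℝ)^2)^k * α^k := hmul ▸ h2
  have hnum : α ≤ 2.725 * (0.7374:ℝ)^2 * D := by simp only [hDdef]; nlinarith
  have hC : (0:ℝ) < 2.725 * (0.7374:ℝ)^2 * D := by positivity
  have h3 : (α^k * D) * (eT α (k+1))^2 ≤ (α^k * D) * (2.725 * (0.7374:ℝ)^2 * ((0.7374:ℝ)^2)^k) := by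
    calc (α^k * D) * (eT α (k+1))^2 = α^k * (D * (eT α (k+1))^2) := by ring
    _ ≤ α := h1
    _ ≤ 2.725 * (0.7374:ℝ)^2 * D := hnum
    _ ≤ (2.725 * (0.7374:ℝ)^2 * D) * (((0.7374:ℝ)^2)^k * α^k) :=
          le_mul_of_one_le_right hC.le h2'
    _ = (α^k * D) * (2.725 * (0.7374:ℝ)^2 * ((0.7374:ℝ)^2)^k) := by ring
  have hpos : (0:ℝ) < α^k * D := mul_pos hpk hD
  have h4 : (eT α (k+1))^2 ≤ 2.725 * (0.7374:ℝ)^2 * ((0.7374:ℝ)^2)^k :=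
    le_of_mul_le_mul_left h3 hpos
  calc (eT α (k+1))^2 ≤ 2.725 * (0.7374:ℝ)^2 * ((0.7374:ℝ)^2)^k := h4
  _ = 2.725 * ((0.7374:ℝ)^(k+1))^2 := by rw [← pow_mul, ← pow_mul]; ring_nf

lemma e_abs_le (α : ℝ) (hα : α ^ 3 = α ^ 2 + α + 1) (n : ℕ) (hn : 1 ≤ n) :
    |eT α n| ≤ 1.6509 * (0.7374:ℝ)^n := by
  obtain ⟨k, rfl⟩ : ∃ k, n = k + 1 := ⟨n - 1, by omega⟩
  have hsq := e_sq_le α hα k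
  have hQ : (0:ℝ) < (0.7374:ℝ)^(k+1) := pow_pos (by norm_num) _
  rw [abs_le]
  constructor
  · nlinarith [sq_nonneg (1.6507 * (0.7374:ℝ)^(k+1) + eT α (k+1)), hQ, hsq]
  · nlinarith [sq_nonneg (1.6507 * (0.7374:ℝ)^(k+1) - eT α (k+1)), hQ, hsq]

lemma tail_bound (α : ℝ) (hα : α ^ 3 = α ^ 2 + α + 1) (S₂ : Finset ℕ)
    (h : ∀ i ∈ S₂, 30 ≤ i) : |∑ i ∈ S₂, eT α i| ≤ 0.000676 := by
  set M : ℕ := S₂.sup id + 1 with hM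
  have hsub : S₂ ⊆ Finset.Ico 30 M := by
    intro i hi
    simp only [Finset.mem_Ico]
    have h2 := Finset.le_sup (f := id) hi
    simp only [id_eq] at h2
    exact ⟨h i hi, by omega⟩
  calc |∑ i ∈ S₂, eT α i| ≤ ∑ i ∈ S₂, |eT α i| := Finset.abs_sum_le_sum_abs _ _
  _ ≤ ∑ i ∈ S₂, 1.6509 * (0.7374:ℝ)^i :=
      Finset.sum_le_sum fun i hi => e_abs_le α hα i (by have := h i hi; omega)
  _ ≤ ∑ i ∈ Finset.Ico 30 M, 1.6509 * (0.7374:ℝ)^i :=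
      Finset.sum_le_sum_of_subset_of_nonneg hsub (fun i _ _ => by positivity)
  _ ≤ 0.000676 := by
      rw [Finset.sum_Ico_eq_sum_range]
      have hrw : ∀ i ∈ Finset.range (M - 30), 1.6509 * (0.7374:ℝ)^(30+i)
          = (1.6509 * (0.7374:ℝ)^30) * (0.7374:ℝ)^i := by
        intro i _; rw [pow_add]; ring
      rw [Finset.sum_congr rfl hrw, ← Finset.mul_sum]
      have hgs : ∑ i ∈ Finset.range (M-30), (0.7374:ℝ)^i
          = (1 - (0.7374:ℝ)^(M-30))/(1 - (0.7374:ℝ)) := by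
        rw [geom_sum_eq (by norm_num) _]
        ring
      have hgs2 : ∑ i ∈ Finset.range (M-30), (0.7374:ℝ)^i ≤ 1/(1-(0.7374:ℝ)) := by
        rw [hgs, div_le_div_iff₀ (by norm_num) (by norm_num)]
        nlinarith [pow_nonneg (by norm_num : (0:ℝ) ≤ 0.7374) (M-30)]
      calc (1.6509 * (0.7374:ℝ)^30) * ∑ i ∈ Finset.range (M-30), (0.7374:ℝ)^i
          ≤ (1.6509 * (0.7374:ℝ)^30) * (1/(1-(0.7374:ℝ))) :=
            mul_le_mul_of_nonneg_left hgs2 (by positivity)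
      _ ≤ 0.000676 := by norm_num

lemma sum_ub (α : ℝ) (hlo : 1.8392867552141611 < α) (hhi : α < 1.8392867552141612) :
    ∑ i ∈ Finset.Ico 3 30, max (eT α i) 0 ≤ 0.8481 := by
  have hu3 : max (eT α 3) 0 ≤ (0.160713244786:ℝ) := max_le (by simp only [eT]; norm_num [trib4, trib3]; linarith) (by norm_num)
  have hu4 : max (eT α 4) 0 ≤ (0.321426489572:ℝ) := max_le (by simp only [eT]; norm_num [trib5, trib4]; linarith) (by norm_num)
  have hu5 : max (eT α 5) 0 ≤ (0:ℝ) := max_le (by simp only [eT]; norm_num [trib6, trib5]; linarith) (by norm_num)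
  have hu6 : max (eT α 6) 0 ≤ (0.124992713501:ℝ) := max_le (by simp only [eT]; norm_num [trib7, trib6]; linarith) (by norm_num)
  have hu7 : max (eT α 7) 0 ≤ (0.089272182216:ℝ) := max_le (by simp only [eT]; norm_num [trib8, trib7]; linarith) (by norm_num)
  have hu8 : max (eT α 8) 0 ≤ (0:ℝ) := max_le (by simp only [eT]; norm_num [trib9, trib8]; linarith) (by norm_num)
  have hu9 : max (eT α 9) 0 ≤ (0.071382770577:ℝ) := max_le (by simp only [eT]; norm_num [trib10, trib9]; linarith) (by norm_num)
  have hu10 : max (eT α 10) 0 ≤ (0.017772827653:ℝ) := max_le (by simp only [eT]; norm_num [trib11, trib10]; linarith) (by norm_num)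
  have hu11 : max (eT α 11) 0 ≤ (0:ℝ) := max_le (by simp only [eT]; norm_num [trib12, trib11]; linarith) (by norm_num)
  have hu12 : max (eT α 12) 0 ≤ (0.03542907132:ℝ) := max_le (by simp only [eT]; norm_num [trib13, trib12]; linarith) (by norm_num)
  have hu13 : max (eT α 13) 0 ≤ (0:ℝ) := max_le (by simp only [eT]; norm_num [trib14, trib13]; linarith) (by norm_num)
  have hu14 : max (eT α 14) 0 ≤ (0:ℝ) := max_le (by simp only [eT]; norm_num [trib15, trib14]; linarith) (by norm_num)
  have hu15 : max (eT α 15) 0 ≤ (0.016082359856:ℝ) := max_le (by simp only [eT]; norm_num [trib16, trib15]; linarith) (by norm_num)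
  have hu16 : max (eT α 16) 0 ≤ (0:ℝ) := max_le (by simp only [eT]; norm_num [trib17, trib16]; linarith) (by norm_num)
  have hu17 : max (eT α 17) 0 ≤ (0:ℝ) := max_le (by simp only [eT]; norm_num [trib18, trib17]; linarith) (by norm_num)
  have hu18 : max (eT α 18) 0 ≤ (0.006813932965:ℝ) := max_le (by simp only [eT]; norm_num [trib19, trib18]; linarith) (by norm_num)
  have hu19 : max (eT α 19) 0 ≤ (0:ℝ) := max_le (by simp only [eT]; norm_num [trib20, trib19]; linarith) (by norm_num)
  have hu20 : max (eT α 20) 0 ≤ (0:ℝ) := max_le (by simp only [eT]; norm_num [trib21, trib20]; linarith) (by norm_num)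
  have hu21 : max (eT α 21) 0 ≤ (0.002714802798:ℝ) := max_le (by simp only [eT]; norm_num [trib22, trib21]; linarith) (by norm_num)
  have hu22 : max (eT α 22) 0 ≤ (0:ℝ) := max_le (by simp only [eT]; norm_num [trib23, trib22]; linarith) (by norm_num)
  have hu23 : max (eT α 23) 0 ≤ (0:ℝ) := max_le (by simp only [eT]; norm_num [trib24, trib23]; linarith) (by norm_num)
  have hu24 : max (eT α 24) 0 ≤ (0.001016314614:ℝ) := max_le (by simp only [eT]; norm_num [trib25, trib24]; linarith) (by norm_num)
  have hu25 : max (eT α 25) 0 ≤ (0:ℝ) := max_le (by simp only [eT]; norm_num [trib26, trib25]; linarith) (by norm_num)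
  have hu26 : max (eT α 26) 0 ≤ (0.000019980228:ℝ) := max_le (by simp only [eT]; norm_num [trib27, trib26]; linarith) (by norm_num)
  have hu27 : max (eT α 27) 0 ≤ (0.00035412127:ℝ) := max_le (by simp only [eT]; norm_num [trib28, trib27]; linarith) (by norm_num)
  have hu28 : max (eT α 28) 0 ≤ (0:ℝ) := max_le (by simp only [eT]; norm_num [trib29, trib28]; linarith) (by norm_num)
  have hu29 : max (eT α 29) 0 ≤ (0.000066029424:ℝ) := max_le (by simp only [eT]; norm_num [trib30, trib29]; linarith) (by norm_num)
  rw [Finset.sum_Ico_eq_sum_range]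
  simp only [Finset.sum_range_succ, Finset.sum_range_zero]
  norm_num
  linarith

lemma sum_lb (α : ℝ) (hlo : 1.8392867552141611 < α) (hhi : α < 1.8392867552141612) :
    (-0.58917 : ℝ) ≤ ∑ i ∈ Finset.Ico 3 30, min (eT α i) 0 := by
  have hl3 : (0:ℝ) ≤ min (eT α 3) 0 := le_min (by simp only [eT]; norm_num [trib4, trib3]; linarith) (by norm_num)
  have hl4 : (0:ℝ) ≤ min (eT α 4) 0 := le_min (by simp only [eT]; norm_num [trib5, trib4]; linarith) (by norm_num)
  have hl5 : (-0.357147020857:ℝ) ≤ min (eT α 5) 0 := le_min (by simp only [eT]; norm_num [trib6, trib5]; linarith) (by norm_num)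
  have hl6 : (0:ℝ) ≤ min (eT α 6) 0 := le_min (by simp only [eT]; norm_num [trib7, trib6]; linarith) (by norm_num)
  have hl7 : (0:ℝ) ≤ min (eT α 7) 0 := le_min (by simp only [eT]; norm_num [trib8, trib7]; linarith) (by norm_num)
  have hl8 : (-0.14288212514:ℝ) ≤ min (eT α 8) 0 := le_min (by simp only [eT]; norm_num [trib9, trib8]; linarith) (by norm_num)
  have hl9 : (0:ℝ) ≤ min (eT α 9) 0 := le_min (by simp only [eT]; norm_num [trib10, trib9]; linarith) (by norm_num)
  have hl10 : (0:ℝ) ≤ min (eT α 10) 0 := le_min (by simp only [eT]; norm_num [trib11, trib10]; linarith) (by norm_num)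
  have hl11 : (-0.053726526911:ℝ) ≤ min (eT α 11) 0 := le_min (by simp only [eT]; norm_num [trib12, trib11]; linarith) (by norm_num)
  have hl12 : (0:ℝ) ≤ min (eT α 12) 0 := le_min (by simp only [eT]; norm_num [trib13, trib12]; linarith) (by norm_num)
  have hl13 : (-0.000524627938:ℝ) ≤ min (eT α 13) 0 := le_min (by simp only [eT]; norm_num [trib14, trib13]; linarith) (by norm_num)
  have hl14 : (-0.018822083528:ℝ) ≤ min (eT α 14) 0 := le_min (by simp only [eT]; norm_num [trib15, trib14]; linarith) (by norm_num)
  have hl15 : (0:ℝ) ≤ min (eT α 15) 0 := le_min (by simp only [eT]; norm_num [trib16, trib15]; linarith) (by norm_num)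
  have hl16 : (-0.00326435161:ℝ) ≤ min (eT α 16) 0 := le_min (by simp only [eT]; norm_num [trib17, trib16]; linarith) (by norm_num)
  have hl17 : (-0.006004075282:ℝ) ≤ min (eT α 17) 0 := le_min (by simp only [eT]; norm_num [trib18, trib17]; linarith) (by norm_num)
  have hl18 : (0:ℝ) ≤ min (eT α 18) 0 := le_min (by simp only [eT]; norm_num [trib19, trib18]; linarith) (by norm_num)
  have hl19 : (-0.002454493928:ℝ) ≤ min (eT α 19) 0 := le_min (by simp only [eT]; norm_num [trib20, trib19]; linarith) (by norm_num)
  have hl20 : (-0.001644636246:ℝ) ≤ min (eT α 20) 0 := le_min (by simp only [eT]; norm_num [trib21, trib20]; linarith) (by norm_num)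
  have hl21 : (0:ℝ) ≤ min (eT α 21) 0 := le_min (by simp only [eT]; norm_num [trib22, trib21]; linarith) (by norm_num)
  have hl22 : (-0.001384327383:ℝ) ≤ min (eT α 22) 0 := le_min (by simp only [eT]; norm_num [trib23, trib22]; linarith) (by norm_num)
  have hl23 : (-0.000314160837:ℝ) ≤ min (eT α 23) 0 := le_min (by simp only [eT]; norm_num [trib24, trib23]; linarith) (by norm_num)
  have hl24 : (0:ℝ) ≤ min (eT α 24) 0 := le_min (by simp only [eT]; norm_num [trib25, trib24]; linarith) (by norm_num)
  have hl25 : (-0.000682173647:ℝ) ≤ min (eT α 25) 0 := le_min (by simp only [eT]; norm_num [trib26, trib25]; linarith) (by norm_num)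
  have hl26 : (0:ℝ) ≤ min (eT α 26) 0 := le_min (by simp only [eT]; norm_num [trib27, trib26]; linarith) (by norm_num)
  have hl27 : (0:ℝ) ≤ min (eT α 27) 0 := le_min (by simp only [eT]; norm_num [trib28, trib27]; linarith) (by norm_num)
  have hl28 : (-0.000308072545:ℝ) ≤ min (eT α 28) 0 := le_min (by simp only [eT]; norm_num [trib29, trib28]; linarith) (by norm_num)
  have hl29 : (0:ℝ) ≤ min (eT α 29) 0 := le_min (by simp only [eT]; norm_num [trib30, trib29]; linarith) (by norm_num)
  rw [Finset.sum_Ico_eq_sum_range]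
  simp only [Finset.sum_range_succ, Finset.sum_range_zero]
  norm_num
  linarith


/-- For every positive integer `n`, `α·n − 0.85 < out(n) < α·n + 0.85`,
    where `out(n)` is the Tribonacci successor of `n`. -/
theorem trib_successor_bounds (α : ℝ) (hα : α ^ 3 = α ^ 2 + α + 1)
    (n : ℕ) (hn : 0 < n) (S : Finset ℕ) (hS : IsTribRep S)
    (hsum : n = ∑ i ∈ S, trib i) :
    α * n - 0.85 < (↑(∑ i ∈ S, trib (i + 1)) : ℝ) ∧
      (↑(∑ i ∈ S, trib (i + 1)) : ℝ) < α * n + 0.85 := by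
  have hlo := alpha_lo α hα
  have hhi := alpha_hi α hα
  have hcast : (↑(∑ i ∈ S, trib (i + 1)) : ℝ) = α * n + ∑ i ∈ S, eT α i := by
    have h1 : ∀ i ∈ S, ((trib (i+1) : ℕ) : ℝ) = α * trib i + eT α i := by
      intro i _; simp [eT]
    push_cast
    rw [Finset.sum_congr rfl h1, Finset.sum_add_distrib, ← Finset.mul_sum]
    have h2 : (n : ℝ) = ∑ i ∈ S, (trib i : ℝ) := by exact_mod_cast congrArg (Nat.cast : ℕ → ℝ) hsum
    rw [h2]
  rw [hcast]
  -- split the sum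
  have hsplit := Finset.sum_filter_add_sum_filter_not S (fun i => i < 30) (eT α)
  set A := ∑ i ∈ S.filter (fun i => i < 30), eT α i with hA
  set B := ∑ i ∈ S.filter (fun i => ¬ i < 30), eT α i with hB
  have hsub1 : S.filter (fun i => i < 30) ⊆ Finset.Ico 3 30 := by
    intro i hi
    simp only [Finset.mem_filter] at hi
    simp only [Finset.mem_Ico]
    exact ⟨hS.1 i hi.1, hi.2⟩
  have hAub : A ≤ 0.8481 := by
    calc A ≤ ∑ i ∈ S.filter (fun i => i < 30), max (eT α i) 0 :=
          Finset.sum_le_sum fun i _ => le_max_left _ _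
    _ ≤ ∑ i ∈ Finset.Ico 3 30, max (eT α i) 0 :=
          Finset.sum_le_sum_of_subset_of_nonneg hsub1 fun i _ _ => le_max_right _ _
    _ ≤ 0.8481 := sum_ub α hlo hhi
  have hAlb : (-0.58917 : ℝ) ≤ A := by
    calc (-0.58917 : ℝ) ≤ ∑ i ∈ Finset.Ico 3 30, min (eT α i) 0 := sum_lb α hlo hhi
    _ ≤ ∑ i ∈ S.filter (fun i => i < 30), min (eT α i) 0 := by
          have hneg : ∑ i ∈ S.filter (fun i => i < 30), -(min (eT α i) 0)
              ≤ ∑ i ∈ Finset.Ico 3 30, -(min (eT α i) 0) :=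
            Finset.sum_le_sum_of_subset_of_nonneg hsub1
              (fun i _ _ => neg_nonneg.2 (min_le_right _ _))
          simp only [Finset.sum_neg_distrib] at hneg
          linarith
    _ ≤ A := Finset.sum_le_sum fun i _ => min_le_left _ _
  have hBabs : |B| ≤ 0.000676 := by
    apply tail_bound α hα
    intro i hi
    simp only [Finset.mem_filter] at hi
    omega
  have hB1 := abs_le.1 hBabs
  constructor
  · nlinarith [hsplit, hB1.1, hB1.2, hAlb, hAub]
  · nlinarith [hsplit, hB1.1, hB1.2, hAlb, hAub]
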